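/- Let (S, 𝒜, A) be a measure space, m > 0, and let N_det : S → (0, ∞) be a measurable function such that 0 < ∫_S N_det(x)^{−m} dA(x) < ∞. Define the hazard rate h(n) = ∫_S (m/N_det(x))·(n/N_det(x))^{m−1} dA(x) for n > 0. Then the cumulative hazard H(n) = ∫₀ⁿ h(t) dt equals n^m · ∫_S N_det(x)^{−m} dA(x) for all n ≥ 0, and consequently F(n) := 1 − exp(−H(n)) is the Weibull cumulative distribution function 1 − exp(−(n/η)^m) with scale parameter η = (∫_S N_det(x)^{−m} dA(x))^{−1/m} and shape parameter m. -/

import Mathlib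

open MeasureTheory intervalIntegral Real

/-- On a measure space `(S, 𝒜, A)` with a measurable positive life field
`N_det` such that `0 < ∫ N_det^(-m) dA < ∞`, the hazard rate
`h n = ∫ (m / N_det x) * (n / N_det x)^(m-1) dA` has cumulative hazard
`H n = ∫₀ⁿ h t dt = n^m * ∫ N_det^(-m) dA`, so that `F n = 1 - exp (-H n)` is the Weibull
cdf with scale `η = (∫ N_det^(-m) dA)^(-1/m)` and shape `m`. -/
theorem cumulative_hazard_eq_and_weibull
    {S : Type*} [MeasurableSpace S] (A : Measure S)
    (m : ℝ) (hm : 0 < m)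
    (Ndet : S → ℝ) (hmeas : Measurable Ndet) (hpos : ∀ x, 0 < Ndet x)
    (hint : Integrable (fun x => Ndet x ^ (-m)) A)
    (hIpos : 0 < ∫ x, Ndet x ^ (-m) ∂A)
    (h H F : ℝ → ℝ)
    (hh : ∀ n : ℝ, h n = ∫ x, (m / Ndet x) * (n / Ndet x) ^ (m - 1) ∂A)
    (hH : ∀ n : ℝ, H n = ∫ t in (0 : ℝ)..n, h t)
    (hF : ∀ n : ℝ, F n = 1 - Real.exp (-(H n))) :
    ∀ n ≥ (0 : ℝ),
      H n = n ^ m * ∫ x, Ndet x ^ (-m) ∂A ∧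
      F n = 1 - Real.exp (-((n / (∫ x, Ndet x ^ (-m) ∂A) ^ (-1 / m)) ^ m)) := by
  intro n hn
  set I : ℝ := ∫ x, Ndet x ^ (-m) ∂A with hI
  -- pointwise formula for h on positive t
  have hht : ∀ t : ℝ, 0 < t → h t = m * t ^ (m - 1) * I := by
    intro t ht
    rw [hh t]
    have : (fun x => (m / Ndet x) * (t / Ndet x) ^ (m - 1))
        = fun x => (m * t ^ (m - 1)) * Ndet x ^ (-m) := by
      funext x
      have hN := hpos x
      rw [Real.div_rpow ht.le hN.le, Real.rpow_neg hN.le]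
      have hNm : Ndet x ^ m = Ndet x * Ndet x ^ (m - 1) := by
        rw [← Real.rpow_one_add' hN.le (by simpa using hm.ne' : (1:ℝ) + (m-1) ≠ 0)]
        ring_nf
      rw [hNm]
      field_simp
    rw [this, MeasureTheory.integral_const_mul]
  -- cumulative hazard computation
  have key : H n = n ^ m * I := by
    rw [hH n]
    have hcong : ∫ t in (0:ℝ)..n, h t = ∫ t in (0:ℝ)..n, m * t ^ (m - 1) * I := by
      apply intervalIntegral.integral_congr_ae
      filter_upwards with t ht
      rw [Set.uIoc_of_le hn] at ht
      exact hht t ht.1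
    rw [hcong]
    have : ∫ t in (0:ℝ)..n, m * t ^ (m - 1) * I
        = (m * I) * ∫ t in (0:ℝ)..n, t ^ (m - 1) := by
      rw [← intervalIntegral.integral_const_mul]
      congr 1; funext t; ring
    rw [this, integral_rpow (Or.inl (by linarith))]
    rw [Real.zero_rpow (by linarith : m - 1 + 1 ≠ 0)]
    have hm1 : m - 1 + 1 = m := by ring
    rw [hm1]
    field_simp
    ring
  refine ⟨key, ?_⟩
  rw [hF n, key]
  have hη : (0:ℝ) < I ^ (-1 / m) := Real.rpow_pos_of_pos hIpos _
  have heq : (n / I ^ (-1 / m)) ^ m = n ^ m * I := by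
    rw [Real.div_rpow hn hη.le, ← Real.rpow_mul hIpos.le]
    have : -1 / m * m = -1 := by field_simp
    rw [this, Real.rpow_neg_one]
    field_simp
  rw [heq]
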